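/- Let C be the 5×5 symmetric integer matrix with rows (0,1,1,3,3), (1,2,2,3,3), (1,2,3,4,4), (3,3,4,4,4), (3,3,4,4,5), and let C′ be obtained from C by exchanging C₂₅ ↔ C₃₄ (and symmetric entries), so C′₂₅ = 4 and C′₃₄ = 3. Set λ₁ = a⁴q^{−4}, λ₂ = a⁴q^{−2}t², λ₃ = −a⁶q^{−5}t³, λ₄ = a⁴t⁴, λ₅ = −a⁶q^{−3}t⁵. Then for every N ≥ 0, ∑_{d₁+⋯+d₅=N} (−q)^{∑_{i,j} C_{ij} d_i d_j} ∏ λ_i^{d_i}/(q²;q²)_{d_i} = ∑_{d₁+⋯+d₅=N} (−q)^{∑_{i,j} C′_{ij} d_i d_j} ∏ λ_i^{d_i}/(q²;q²)_{d_i} in ℚ(q,a,t). -/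

import Mathlib

namespace Stmt12Aux

variable {K : Type*} [Field K]

def pq (Q : K) (n : ℕ) : K := ∏ s ∈ Finset.range n, (1 - Q ^ (s + 1))

lemma pq_succ (Q : K) (n : ℕ) : pq Q (n + 1) = pq Q n * (1 - Q ^ (n + 1)) :=
  Finset.prod_range_succ _ _

lemma pq_ne_zero {Q : K} (hQ : ∀ s : ℕ, 1 ≤ s → (1 : K) - Q ^ s ≠ 0) (n : ℕ) :
    pq Q n ≠ 0 := by
  induction n with
  | zero => simp [pq]
  | succ n ih => rw [pq_succ]; exact mul_ne_zero ih (hQ (n + 1) (by omega))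

def gb (Q : K) : ℕ → ℕ → K
  | 0, 0 => 1
  | 0, _ + 1 => 0
  | _ + 1, 0 => 1
  | n + 1, k + 1 => gb Q n (k + 1) + Q ^ (n - k) * gb Q n k

lemma gb_zero_of_lt (Q : K) : ∀ n k : ℕ, n < k → gb Q n k = 0 := by
  intro n
  induction n with
  | zero => intro k hk; match k, hk with | k + 1, _ => rfl
  | succ n ih =>
    intro k hk
    match k, hk with
    | k + 1, hk =>
      show gb Q n (k + 1) + Q ^ (n - k) * gb Q n k = 0
      rw [ih _ (by omega), ih _ (by omega)]; ring

lemma gb_mul_pq (Q : K) : ∀ n k : ℕ, k ≤ n → gb Q n k * (pq Q k * pq Q (n - k)) = pq Q n := by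
  intro n
  induction n with
  | zero => intro k hk; interval_cases k; simp [gb, pq]
  | succ n ih =>
    intro k hk
    match k with
    | 0 => show (1 : K) * (pq Q 0 * pq Q (n + 1)) = pq Q (n + 1); simp [pq]
    | k + 1 =>
      show (gb Q n (k + 1) + Q ^ (n - k) * gb Q n k) *
        (pq Q (k + 1) * pq Q (n + 1 - (k + 1))) = pq Q (n + 1)
      rcases Nat.lt_or_ge n (k + 1) with h | h
      · have hk' : k = n := by omega
        subst hk'
        have hthis := ih k le_rfl
        simp only [Nat.sub_self] at hthis ⊢
        have hpq0 : pq Q 0 = 1 := by simp [pq]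
        rw [hpq0] at hthis ⊢
        rw [gb_zero_of_lt Q k (k + 1) (by omega), pq_succ]
        linear_combination (1 - Q ^ (k + 1)) * hthis
      · have h1 := ih (k + 1) h
        have h2 := ih k (by omega)
        obtain ⟨m, rfl⟩ : ∃ m, n = k + 1 + m := ⟨n - (k + 1), by omega⟩
        have e1 : k + 1 + m - (k + 1) = m := by omega
        have e2 : k + 1 + m - k = m + 1 := by omega
        have e3 : k + 1 + m + 1 - (k + 1) = m + 1 := by omega
        rw [e1] at h1; rw [e2] at h2
        rw [pq_succ] at h1 h2
        have hpow : (Q : K) ^ (k + 1 + m + 1) = Q ^ (k + 1) * Q ^ (m + 1) := by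
          rw [← pow_add]
          exact congrArg (fun i => Q ^ i) (by omega)
        rw [e3, e2, pq_succ Q (k + 1 + m), pq_succ Q m, pq_succ Q k, hpow]
        linear_combination (1 - Q ^ (m + 1)) * h1 + Q ^ (m + 1) * (1 - Q ^ (k + 1)) * h2

lemma gauss {Q y : K} (hy : y ^ 2 = Q) (x : K) : ∀ n : ℕ,
    ∑ k ∈ Finset.range (n + 1), y ^ (k ^ 2) * x ^ k * gb Q n k
      = ∏ j ∈ Finset.range n, (1 + y * x * Q ^ j) := by
  intro n
  induction n with
  | zero => simp [gb]
  | succ n ih =>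
    rw [Finset.sum_range_succ']
    have hgb : ∀ k, gb Q (n + 1) (k + 1) = gb Q n (k + 1) + Q ^ (n - k) * gb Q n k :=
      fun k => rfl
    have hgb0 : gb Q (n + 1) 0 = (1 : K) := rfl
    simp only [hgb, hgb0, mul_add, Finset.sum_add_distrib]
    have hA : (∑ k ∈ Finset.range (n + 1), y ^ ((k + 1) ^ 2) * x ^ (k + 1) * gb Q n (k + 1))
        + y ^ (0 ^ 2) * x ^ 0 * 1
        = ∑ k ∈ Finset.range (n + 1), y ^ (k ^ 2) * x ^ k * gb Q n k := by
      have hstep := Finset.sum_range_succ' (fun k => y ^ (k ^ 2) * x ^ k * gb Q n k) (n + 1)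
      rw [Finset.sum_range_succ (fun k => y ^ (k ^ 2) * x ^ k * gb Q n k) (n + 1),
        gb_zero_of_lt Q n (n + 1) (by omega)] at hstep
      have h0 : gb Q n 0 = (1 : K) := by cases n <;> rfl
      rw [h0] at hstep
      simp only [mul_zero, add_zero] at hstep
      linear_combination -hstep
    have hB : (∑ k ∈ Finset.range (n + 1), y ^ ((k + 1) ^ 2) * x ^ (k + 1) * (Q ^ (n - k) * gb Q n k))
        = (y * x * Q ^ n) * ∑ k ∈ Finset.range (n + 1), y ^ (k ^ 2) * x ^ k * gb Q n k := by
      rw [Finset.mul_sum]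
      apply Finset.sum_congr rfl
      intro k hk
      have hkn : k ≤ n := by simpa using Nat.lt_succ_iff.mp (Finset.mem_range.mp hk)
      obtain ⟨m, rfl⟩ : ∃ m, n = k + m := ⟨n - k, by omega⟩
      have hsub : k + m - k = m := by omega
      have hyk : y ^ ((k + 1) ^ 2) = y ^ (k ^ 2) * Q ^ k * y := by
        have h2 : (k + 1) ^ 2 = k ^ 2 + 2 * k + 1 := by ring
        rw [h2, pow_add, pow_add, pow_mul, hy, pow_one]
      rw [hsub, hyk]
      ring
    rw [add_right_comm, hA, hB, Finset.prod_range_succ, ih]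
    ring

def Sg (Q y : K) (n : ℕ) (x : K) : K :=
  ∑ k ∈ Finset.range (n + 1), y ^ (k ^ 2) * x ^ k / (pq Q (n - k) * pq Q k)

lemma Sg_eq {Q y : K} (hy : y ^ 2 = Q) (hQ : ∀ s : ℕ, 1 ≤ s → (1 : K) - Q ^ s ≠ 0)
    (n : ℕ) (x : K) :
    Sg Q y n x = (∏ j ∈ Finset.range n, (1 + y * x * Q ^ j)) / pq Q n := by
  rw [← gauss hy x n, Sg, Finset.sum_div]
  apply Finset.sum_congr rfl
  intro k hk
  have hkn : k ≤ n := Nat.lt_succ_iff.mp (Finset.mem_range.mp hk)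
  have hmul := gb_mul_pq Q n k hkn
  have h1 := pq_ne_zero hQ (n - k)
  have h2 := pq_ne_zero hQ k
  have h3 := pq_ne_zero hQ n
  field_simp
  linear_combination (-(y ^ k ^ 2 * x ^ k)) * hmul

lemma Sg_key {Q y : K} (hy : y ^ 2 = Q) (hQ : ∀ s : ℕ, 1 ≤ s → (1 : K) - Q ^ s ≠ 0)
    (e f : ℕ) (x : K) :
    Sg Q y e (x * Q ^ f) * Sg Q y f x = Sg Q y e x * Sg Q y f (x * Q ^ e) := by
  have key : ∀ m n : ℕ, (∏ j ∈ Finset.range m, (1 + y * x * Q ^ j)) *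
      (∏ j ∈ Finset.range n, (1 + y * (x * Q ^ m) * Q ^ j)) =
      ∏ j ∈ Finset.range (m + n), (1 + y * x * Q ^ j) := by
    intro m n
    rw [Finset.prod_range_add]
    congr 1
    apply Finset.prod_congr rfl
    intro j _
    rw [pow_add]
    ring
  rw [Sg_eq hy hQ, Sg_eq hy hQ, Sg_eq hy hQ, Sg_eq hy hQ]
  rw [div_mul_div_comm, div_mul_div_comm]
  rw [mul_comm (∏ j ∈ Finset.range e, (1 + y * (x * Q ^ f) * Q ^ j)) _, key f e,
    mul_comm (pq Q e) _]
  rw [key e f, add_comm f e, mul_comm (pq Q f) _]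

lemma fiber {Q y : K} (hy : y ^ 2 = Q) (hQ : ∀ s : ℕ, 1 ≤ s → (1 : K) - Q ^ s ≠ 0)
    (c r : K) (e f : ℕ) :
    ∑ p ∈ Finset.range (e + 1) ×ˢ Finset.range (f + 1),
      c * (y ^ (p.1 ^ 2) * (r * Q ^ f) ^ p.1 / (pq Q (e - p.1) * pq Q p.1))
        * (y ^ (p.2 ^ 2) * r ^ p.2 / (pq Q (f - p.2) * pq Q p.2))
    = ∑ p ∈ Finset.range (e + 1) ×ˢ Finset.range (f + 1),
      c * (y ^ (p.1 ^ 2) * r ^ p.1 / (pq Q (e - p.1) * pq Q p.1))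
        * (y ^ (p.2 ^ 2) * (r * Q ^ e) ^ p.2 / (pq Q (f - p.2) * pq Q p.2)) := by
  have h : ∀ X Z : K, ∑ p ∈ Finset.range (e + 1) ×ˢ Finset.range (f + 1),
      c * (y ^ (p.1 ^ 2) * X ^ p.1 / (pq Q (e - p.1) * pq Q p.1))
        * (y ^ (p.2 ^ 2) * Z ^ p.2 / (pq Q (f - p.2) * pq Q p.2))
      = c * (Sg Q y e X * Sg Q y f Z) := by
    intro X Z
    rw [Finset.sum_product]
    simp only [← Finset.mul_sum]
    rw [← Finset.sum_mul, ← Finset.mul_sum]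
    rw [Sg, Sg, mul_assoc]
  rw [h, h, Sg_key hy hQ e f r]

lemma termC (y a t : K) (d1 b m dl n e f : ℕ)
    (he : e = b + m) (hf : f = dl + n) :
    (y ^ (∑ i, ∑ j, (!![0, 1, 1, 3, 3; 1, 2, 2, 3, 3; 1, 2, 3, 4, 4; 3, 3, 4, 4, 4;
        3, 3, 4, 4, 5] : Matrix (Fin 5) (Fin 5) ℤ) i j
          * ((![d1, m, b, n, dl] : Fin 5 → ℕ) i : ℤ) * ((![d1, m, b, n, dl] : Fin 5 → ℕ) j : ℤ)) *
      ∏ i, ((![a ^ 4 * (y ^ 4)⁻¹, a ^ 4 * (y ^ 2)⁻¹ * t ^ 2,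
        a ^ 6 * (y ^ 5)⁻¹ * t ^ 3, a ^ 4 * t ^ 4,
        a ^ 6 * (y ^ 3)⁻¹ * t ^ 5] : Fin 5 → K) i ^ ((![d1, m, b, n, dl] : Fin 5 → ℕ) i)
          / pq (y ^ 2) ((![d1, m, b, n, dl] : Fin 5 → ℕ) i)))
    = (y ^ (2*d1*e + 6*d1*f + 2*e^2 + 4*f^2 + 6*e*f)
          * (a ^ 4 * (y ^ 4)⁻¹) ^ d1 * (a ^ 4 * (y ^ 2)⁻¹ * t ^ 2) ^ e * (a ^ 4 * t ^ 4) ^ f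
          / pq (y ^ 2) d1)
        * (y ^ (b ^ 2) * (a ^ 2 * t * (y ^ 3)⁻¹ * (y ^ 2) ^ f) ^ b / (pq (y ^ 2) m * pq (y ^ 2) b))
        * (y ^ (dl ^ 2) * (a ^ 2 * t * (y ^ 3)⁻¹) ^ dl / (pq (y ^ 2) n * pq (y ^ 2) dl)) := by
  subst he hf
  simp only [Fin.sum_univ_five, Fin.prod_univ_five]
  norm_num [Matrix.cons_val_zero, Matrix.cons_val_one, Matrix.cons_val_two,
    Matrix.cons_val_three, Matrix.cons_val_four, Matrix.head_cons, Matrix.tail_cons,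
    Matrix.vecHead, Matrix.vecTail]
  norm_cast
  field_simp
  ring

lemma termC' (y a t : K) (d1 b m dl n e f : ℕ)
    (he : e = b + m) (hf : f = dl + n) :
    (y ^ (∑ i, ∑ j, (!![0, 1, 1, 3, 3; 1, 2, 2, 3, 4; 1, 2, 3, 3, 4; 3, 3, 3, 4, 4;
        3, 4, 4, 4, 5] : Matrix (Fin 5) (Fin 5) ℤ) i j
          * ((![d1, m, b, n, dl] : Fin 5 → ℕ) i : ℤ) * ((![d1, m, b, n, dl] : Fin 5 → ℕ) j : ℤ)) *
      ∏ i, ((![a ^ 4 * (y ^ 4)⁻¹, a ^ 4 * (y ^ 2)⁻¹ * t ^ 2,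
        a ^ 6 * (y ^ 5)⁻¹ * t ^ 3, a ^ 4 * t ^ 4,
        a ^ 6 * (y ^ 3)⁻¹ * t ^ 5] : Fin 5 → K) i ^ ((![d1, m, b, n, dl] : Fin 5 → ℕ) i)
          / pq (y ^ 2) ((![d1, m, b, n, dl] : Fin 5 → ℕ) i)))
    = (y ^ (2*d1*e + 6*d1*f + 2*e^2 + 4*f^2 + 6*e*f)
          * (a ^ 4 * (y ^ 4)⁻¹) ^ d1 * (a ^ 4 * (y ^ 2)⁻¹ * t ^ 2) ^ e * (a ^ 4 * t ^ 4) ^ f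
          / pq (y ^ 2) d1)
        * (y ^ (b ^ 2) * (a ^ 2 * t * (y ^ 3)⁻¹) ^ b / (pq (y ^ 2) m * pq (y ^ 2) b))
        * (y ^ (dl ^ 2) * (a ^ 2 * t * (y ^ 3)⁻¹ * (y ^ 2) ^ e) ^ dl
            / (pq (y ^ 2) n * pq (y ^ 2) dl)) := by
  subst he hf
  simp only [Fin.sum_univ_five, Fin.prod_univ_five]
  norm_num [Matrix.cons_val_zero, Matrix.cons_val_one, Matrix.cons_val_two,
    Matrix.cons_val_three, Matrix.cons_val_four, Matrix.head_cons, Matrix.tail_cons,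
    Matrix.vecHead, Matrix.vecTail]
  norm_cast
  field_simp
  ring

end Stmt12Aux

open Stmt12Aux in
/-- Two of the equivalent quivers for the cinquefoil knot `5₁`, differing by the
transposition `C₂₅ ↔ C₃₄`, have equal specialized motivic generating series,
degree by degree in the overall variable. -/
theorem stmt_12 {K : Type*} [Field K] (q a t : K)
    (hq : q ≠ 0) (ha : a ≠ 0) (ht : t ≠ 0)
    (hpoch : ∀ s : ℕ, 1 ≤ s → (1 : K) - q ^ (2 * s) ≠ 0)
    (C C' : Matrix (Fin 5) (Fin 5) ℤ)
    (hC : C = !![0, 1, 1, 3, 3;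
                 1, 2, 2, 3, 3;
                 1, 2, 3, 4, 4;
                 3, 3, 4, 4, 4;
                 3, 3, 4, 4, 5])
    (hC' : C' = !![0, 1, 1, 3, 3;
                   1, 2, 2, 3, 4;
                   1, 2, 3, 3, 4;
                   3, 3, 3, 4, 4;
                   3, 4, 4, 4, 5])
    (lam : Fin 5 → K)
    (hlam : lam = ![a ^ 4 * q ^ (-4 : ℤ), a ^ 4 * q ^ (-2 : ℤ) * t ^ 2,
      -(a ^ 6 * q ^ (-5 : ℤ) * t ^ 3), a ^ 4 * t ^ 4,
      -(a ^ 6 * q ^ (-3 : ℤ) * t ^ 5)])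
    (N : ℕ) :
    ∑ dv ∈ (Fintype.piFinset fun _ : Fin 5 => Finset.range (N + 1)).filter
        (fun dv => ∑ i, dv i = N),
      (-q) ^ (∑ i, ∑ j, C i j * (dv i : ℤ) * (dv j : ℤ)) *
        ∏ i, (lam i ^ dv i / ∏ s ∈ Finset.range (dv i), (1 - q ^ (2 * (s + 1)))) =
    ∑ dv ∈ (Fintype.piFinset fun _ : Fin 5 => Finset.range (N + 1)).filter
        (fun dv => ∑ i, dv i = N),
      (-q) ^ (∑ i, ∑ j, C' i j * (dv i : ℤ) * (dv j : ℤ)) *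
        ∏ i, (lam i ^ dv i / ∏ s ∈ Finset.range (dv i), (1 - q ^ (2 * (s + 1)))) := by
  subst hC hC' hlam
  have hy : (-q : K) ≠ 0 := neg_ne_zero.mpr hq
  -- rewrite the weights in terms of `y = -q` (no signs)
  have hv : (![a ^ 4 * q ^ (-4 : ℤ), a ^ 4 * q ^ (-2 : ℤ) * t ^ 2,
      -(a ^ 6 * q ^ (-5 : ℤ) * t ^ 3), a ^ 4 * t ^ 4,
      -(a ^ 6 * q ^ (-3 : ℤ) * t ^ 5)] : Fin 5 → K)
      = ![a ^ 4 * ((-q) ^ 4)⁻¹, a ^ 4 * ((-q) ^ 2)⁻¹ * t ^ 2,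
        a ^ 6 * ((-q) ^ 5)⁻¹ * t ^ 3, a ^ 4 * t ^ 4,
        a ^ 6 * ((-q) ^ 3)⁻¹ * t ^ 5] := by
    have g2 : ((-q : K) ^ 2) = q ^ 2 := by ring
    have g3 : ((-q : K) ^ 3) = -(q ^ 3) := by ring
    have g4 : ((-q : K) ^ 4) = q ^ 4 := by ring
    have g5 : ((-q : K) ^ 5) = -(q ^ 5) := by ring
    funext i
    fin_cases i
    · show a ^ 4 * q ^ (-4 : ℤ) = a ^ 4 * ((-q) ^ 4)⁻¹
      rw [g4, show (-4 : ℤ) = -(4 : ℕ) by norm_num, zpow_neg, zpow_natCast]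
    · show a ^ 4 * q ^ (-2 : ℤ) * t ^ 2 = a ^ 4 * ((-q) ^ 2)⁻¹ * t ^ 2
      rw [g2, show (-2 : ℤ) = -(2 : ℕ) by norm_num, zpow_neg, zpow_natCast]
    · show -(a ^ 6 * q ^ (-5 : ℤ) * t ^ 3) = a ^ 6 * ((-q) ^ 5)⁻¹ * t ^ 3
      rw [g5, show (-5 : ℤ) = -(5 : ℕ) by norm_num, zpow_neg, zpow_natCast, inv_neg]
      ring
    · rfl
    · show -(a ^ 6 * q ^ (-3 : ℤ) * t ^ 5) = a ^ 6 * ((-q) ^ 3)⁻¹ * t ^ 5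
      rw [g3, show (-3 : ℤ) = -(3 : ℕ) by norm_num, zpow_neg, zpow_natCast, inv_neg]
      ring
  have hpq : ∀ d : ℕ, (∏ s ∈ Finset.range d, ((1 : K) - q ^ (2 * (s + 1))))
      = pq ((-q) ^ 2) d := by
    intro d
    unfold pq
    apply Finset.prod_congr rfl
    intro s _
    rw [neg_sq, ← pow_mul]
  have hQ : ∀ s : ℕ, 1 ≤ s → (1 : K) - ((-q) ^ 2) ^ s ≠ 0 := by
    intro s hs
    rw [show (((-q : K)) ^ 2) ^ s = q ^ (2 * s) by rw [neg_sq, ← pow_mul]]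
    exact hpoch s hs
  have hy2 : (-q : K) ^ 2 = (-q) ^ 2 := rfl
  simp only [hv]
  simp_rw [hpq]
  -- fiberwise decomposition
  set T : Finset (ℕ × ℕ × ℕ) :=
    (Finset.range (N + 1) ×ˢ Finset.range (N + 1) ×ˢ Finset.range (N + 1)).filter
      (fun p => p.1 + p.2.1 + p.2.2 = N) with hT
  have hmap : ∀ dv ∈ (Fintype.piFinset fun _ : Fin 5 => Finset.range (N + 1)).filter
      (fun dv => ∑ i, dv i = N), (dv 0, dv 1 + dv 2, dv 3 + dv 4) ∈ T := by
    intro dv hdv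
    simp only [Finset.mem_filter, Fintype.mem_piFinset, Finset.mem_range] at hdv
    obtain ⟨hmem, hsum⟩ := hdv
    rw [Fin.sum_univ_five] at hsum
    simp only [hT, Finset.mem_filter, Finset.mem_product, Finset.mem_range]
    refine ⟨⟨by omega, by omega, by omega⟩, by omega⟩
  rw [← Finset.sum_fiberwise_of_maps_to hmap
      (fun dv => (-q) ^ (∑ i, ∑ j, (!![0, 1, 1, 3, 3; 1, 2, 2, 3, 3; 1, 2, 3, 4, 4;
          3, 3, 4, 4, 4; 3, 3, 4, 4, 5] : Matrix (Fin 5) (Fin 5) ℤ) i j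
            * (dv i : ℤ) * (dv j : ℤ)) *
        ∏ i, ((![a ^ 4 * ((-q) ^ 4)⁻¹, a ^ 4 * ((-q) ^ 2)⁻¹ * t ^ 2,
          a ^ 6 * ((-q) ^ 5)⁻¹ * t ^ 3, a ^ 4 * t ^ 4,
          a ^ 6 * ((-q) ^ 3)⁻¹ * t ^ 5] : Fin 5 → K) i ^ dv i / pq ((-q) ^ 2) (dv i))),
    ← Finset.sum_fiberwise_of_maps_to hmap
      (fun dv => (-q) ^ (∑ i, ∑ j, (!![0, 1, 1, 3, 3; 1, 2, 2, 3, 4; 1, 2, 3, 3, 4;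
          3, 3, 3, 4, 4; 3, 4, 4, 4, 5] : Matrix (Fin 5) (Fin 5) ℤ) i j
            * (dv i : ℤ) * (dv j : ℤ)) *
        ∏ i, ((![a ^ 4 * ((-q) ^ 4)⁻¹, a ^ 4 * ((-q) ^ 2)⁻¹ * t ^ 2,
          a ^ 6 * ((-q) ^ 5)⁻¹ * t ^ 3, a ^ 4 * t ^ 4,
          a ^ 6 * ((-q) ^ 3)⁻¹ * t ^ 5] : Fin 5 → K) i ^ dv i / pq ((-q) ^ 2) (dv i)))]
  apply Finset.sum_congr rfl
  intro p hp
  obtain ⟨d1, e, f⟩ := p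
  simp only [hT, Finset.mem_filter, Finset.mem_product, Finset.mem_range] at hp
  obtain ⟨⟨hd1, he, hf⟩, hsum⟩ := hp
  -- bijection between the fiber and the split rectangle
  have bij : ∀ F : (Fin 5 → ℕ) → K,
      ∑ dv ∈ ((Fintype.piFinset fun _ : Fin 5 => Finset.range (N + 1)).filter
          (fun dv => ∑ i, dv i = N)).filter
          (fun dv => (dv 0, dv 1 + dv 2, dv 3 + dv 4) = (d1, e, f)), F dv
      = ∑ p ∈ Finset.range (e + 1) ×ˢ Finset.range (f + 1),
          F ![d1, e - p.1, p.1, f - p.2, p.2] := by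
    intro F
    apply Finset.sum_nbij' (i := fun dv => (dv 2, dv 4))
      (j := fun p => ![d1, e - p.1, p.1, f - p.2, p.2])
    · intro dv hdv
      simp only [Finset.mem_filter, Fintype.mem_piFinset, Finset.mem_range, Prod.mk.injEq] at hdv
      obtain ⟨⟨_, hsum'⟩, h0, h12, h34⟩ := hdv
      simp only [Finset.mem_product, Finset.mem_range]
      omega
    · intro p hp
      simp only [Finset.mem_product, Finset.mem_range] at hp
      obtain ⟨hb, hdl⟩ := hp
      simp only [Finset.mem_filter, Fintype.mem_piFinset, Finset.mem_range, Prod.mk.injEq]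
      refine ⟨⟨fun i => ?_, ?_⟩, ?_, ?_, ?_⟩
      · fin_cases i <;> simp <;> omega
      · rw [Fin.sum_univ_five]
        simp only [Matrix.cons_val_zero, Matrix.cons_val_one, Matrix.head_cons,
          Matrix.cons_val_two, Matrix.tail_cons, Matrix.cons_val_three, Matrix.cons_val_four]
        omega
      · simp
      · simp only [Matrix.cons_val_one, Matrix.head_cons, Matrix.cons_val_two,
          Matrix.tail_cons, Matrix.cons_val_zero]
        omega
      · simp only [Matrix.cons_val_three, Matrix.cons_val_four, Matrix.head_cons,
          Matrix.tail_cons]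
        omega
    · intro dv hdv
      simp only [Finset.mem_filter, Fintype.mem_piFinset, Finset.mem_range, Prod.mk.injEq] at hdv
      obtain ⟨⟨_, hsum'⟩, h0, h12, h34⟩ := hdv
      funext i
      fin_cases i <;> simp <;> omega
    · intro p hp
      simp
    · intro dv hdv
      simp only [Finset.mem_filter, Fintype.mem_piFinset, Finset.mem_range, Prod.mk.injEq] at hdv
      obtain ⟨⟨_, hsum'⟩, h0, h12, h34⟩ := hdv
      congr 1
      funext i
      fin_cases i <;> simp <;> omega
  rw [bij, bij]
  -- evaluate each term and apply the key identity
  have hterm : ∀ p ∈ Finset.range (e + 1) ×ˢ Finset.range (f + 1),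
      ((-q) ^ (∑ i, ∑ j, (!![0, 1, 1, 3, 3; 1, 2, 2, 3, 3; 1, 2, 3, 4, 4;
          3, 3, 4, 4, 4; 3, 3, 4, 4, 5] : Matrix (Fin 5) (Fin 5) ℤ) i j
            * ((![d1, e - p.1, p.1, f - p.2, p.2] : Fin 5 → ℕ) i : ℤ)
            * ((![d1, e - p.1, p.1, f - p.2, p.2] : Fin 5 → ℕ) j : ℤ)) *
        ∏ i, ((![a ^ 4 * ((-q) ^ 4)⁻¹, a ^ 4 * ((-q) ^ 2)⁻¹ * t ^ 2,
          a ^ 6 * ((-q) ^ 5)⁻¹ * t ^ 3, a ^ 4 * t ^ 4,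
          a ^ 6 * ((-q) ^ 3)⁻¹ * t ^ 5] : Fin 5 → K) i
            ^ ((![d1, e - p.1, p.1, f - p.2, p.2] : Fin 5 → ℕ) i)
            / pq ((-q) ^ 2) ((![d1, e - p.1, p.1, f - p.2, p.2] : Fin 5 → ℕ) i)))
      = ((-q) ^ (2*d1*e + 6*d1*f + 2*e^2 + 4*f^2 + 6*e*f)
            * (a ^ 4 * ((-q) ^ 4)⁻¹) ^ d1 * (a ^ 4 * ((-q) ^ 2)⁻¹ * t ^ 2) ^ e
            * (a ^ 4 * t ^ 4) ^ f / pq ((-q) ^ 2) d1)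
          * ((-q) ^ (p.1 ^ 2) * (a ^ 2 * t * ((-q) ^ 3)⁻¹ * ((-q) ^ 2) ^ f) ^ p.1
              / (pq ((-q) ^ 2) (e - p.1) * pq ((-q) ^ 2) p.1))
          * ((-q) ^ (p.2 ^ 2) * (a ^ 2 * t * ((-q) ^ 3)⁻¹) ^ p.2
              / (pq ((-q) ^ 2) (f - p.2) * pq ((-q) ^ 2) p.2)) := by
    intro p hp
    simp only [Finset.mem_product, Finset.mem_range] at hp
    obtain ⟨hb, hdl⟩ := hp
    obtain ⟨m, hm⟩ : ∃ m, e = p.1 + m := ⟨e - p.1, by omega⟩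
    obtain ⟨n, hn⟩ : ∃ n, f = p.2 + n := ⟨f - p.2, by omega⟩
    have h1 : e - p.1 = m := by omega
    have h2 : f - p.2 = n := by omega
    rw [h1, h2]
    exact termC (-q) a t d1 p.1 m p.2 n e f (by omega) (by omega)
  have hterm' : ∀ p ∈ Finset.range (e + 1) ×ˢ Finset.range (f + 1),
      ((-q) ^ (∑ i, ∑ j, (!![0, 1, 1, 3, 3; 1, 2, 2, 3, 4; 1, 2, 3, 3, 4;
          3, 3, 3, 4, 4; 3, 4, 4, 4, 5] : Matrix (Fin 5) (Fin 5) ℤ) i j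
            * ((![d1, e - p.1, p.1, f - p.2, p.2] : Fin 5 → ℕ) i : ℤ)
            * ((![d1, e - p.1, p.1, f - p.2, p.2] : Fin 5 → ℕ) j : ℤ)) *
        ∏ i, ((![a ^ 4 * ((-q) ^ 4)⁻¹, a ^ 4 * ((-q) ^ 2)⁻¹ * t ^ 2,
          a ^ 6 * ((-q) ^ 5)⁻¹ * t ^ 3, a ^ 4 * t ^ 4,
          a ^ 6 * ((-q) ^ 3)⁻¹ * t ^ 5] : Fin 5 → K) i
            ^ ((![d1, e - p.1, p.1, f - p.2, p.2] : Fin 5 → ℕ) i)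
            / pq ((-q) ^ 2) ((![d1, e - p.1, p.1, f - p.2, p.2] : Fin 5 → ℕ) i)))
      = ((-q) ^ (2*d1*e + 6*d1*f + 2*e^2 + 4*f^2 + 6*e*f)
            * (a ^ 4 * ((-q) ^ 4)⁻¹) ^ d1 * (a ^ 4 * ((-q) ^ 2)⁻¹ * t ^ 2) ^ e
            * (a ^ 4 * t ^ 4) ^ f / pq ((-q) ^ 2) d1)
          * ((-q) ^ (p.1 ^ 2) * (a ^ 2 * t * ((-q) ^ 3)⁻¹) ^ p.1
              / (pq ((-q) ^ 2) (e - p.1) * pq ((-q) ^ 2) p.1))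
          * ((-q) ^ (p.2 ^ 2) * (a ^ 2 * t * ((-q) ^ 3)⁻¹ * ((-q) ^ 2) ^ e) ^ p.2
              / (pq ((-q) ^ 2) (f - p.2) * pq ((-q) ^ 2) p.2)) := by
    intro p hp
    simp only [Finset.mem_product, Finset.mem_range] at hp
    obtain ⟨hb, hdl⟩ := hp
    obtain ⟨m, hm⟩ : ∃ m, e = p.1 + m := ⟨e - p.1, by omega⟩
    obtain ⟨n, hn⟩ : ∃ n, f = p.2 + n := ⟨f - p.2, by omega⟩
    have h1 : e - p.1 = m := by omega
    have h2 : f - p.2 = n := by omega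
    rw [h1, h2]
    exact termC' (-q) a t d1 p.1 m p.2 n e f (by omega) (by omega)
  rw [Finset.sum_congr rfl hterm, Finset.sum_congr rfl hterm']
  exact fiber rfl hQ _ _ e f
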